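/- Let V : Δ → ℝ be the maximum of finitely many affine functions, let C ⊆ Δ be a polytope with extreme points x_1,…,x_k, and suppose V is affine on each face of its induced subdivision. Let F place positive weights p_1,…,p_k on x_1,…,x_k (plus possibly mass elsewhere), and let F̂ collapse this mass to the barycenter x* of x_1,…,x_k with weights p_j. If E_F[V] = E_{F̂}[V], then V is affine on C. -/
import Mathlib

lemma faff {Θ : Type*} [Fintype Θ] (c : Θ → ℝ) (d a b : ℝ) (y z : Θ → ℝ)
    (hab : a + b = 1) :
    ∑ θ, c θ * (a * y θ + b * z θ) + d
      = a * (∑ θ, c θ * y θ + d) + b * (∑ θ, c θ * z θ + d) := by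
  have h : ∀ θ, c θ * (a * y θ + b * z θ) = a * (c θ * y θ) + b * (c θ * z θ) := by
    intro θ; ring
  simp only [h, Finset.sum_add_distrib, ← Finset.mul_sum]
  linear_combination (-d) * hab

/-- If V is the max of finitely many affine functions, C is the polytope spanned
by x_1,…,x_k (its extreme points), all weights p_j are positive, and collapsing this mass to
the barycenter leaves the expectation of V unchanged, then V is affine on C. -/
theorem stmt4 {Θ : Type*} [Fintype Θ] {I : Type*} [Fintype I] [Nonempty I] {k : ℕ}
    (α : I → Θ → ℝ) (β : I → ℝ) (V : (Θ → ℝ) → ℝ)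
    (hV : ∀ x ∈ stdSimplex ℝ Θ,
      V x = Finset.univ.sup' Finset.univ_nonempty (fun i => ∑ θ, α i θ * x θ + β i))
    (x : Fin k → (Θ → ℝ)) (hxΔ : ∀ j, x j ∈ stdSimplex ℝ Θ)
    (C : Set (Θ → ℝ)) (hCdef : C = convexHull ℝ (Set.range x))
    (p : Fin k → ℝ) (hp : ∀ j, 0 < p j)
    (xstar : Θ → ℝ) (hxstar : xstar = (∑ j, p j)⁻¹ • ∑ j, p j • x j)
    (heq : ∑ j, p j * V (x j) = (∑ j, p j) * V xstar) :
    ∃ (a : Θ → ℝ) (b : ℝ), ∀ y ∈ C, V y = ∑ θ, a θ * y θ + b := by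
  subst hCdef
  rcases Nat.eq_zero_or_pos k with hk | hk
  · subst hk
    refine ⟨α (Classical.arbitrary I), β (Classical.arbitrary I), fun y hy => ?_⟩
    simp [Set.range_eq_empty, convexHull_empty] at hy
  have hne : Nonempty (Fin k) := Fin.pos_iff_nonempty.mp hk
  have hS : 0 < ∑ j, p j := Finset.sum_pos (fun j _ => hp j) Finset.univ_nonempty
  have hxstar' : xstar = Finset.univ.centerMass p x := by
    rw [hxstar, Finset.centerMass]
  have hxstarΔ : xstar ∈ stdSimplex ℝ Θ := by
    rw [hxstar']
    exact (convex_stdSimplex ℝ Θ).centerMass_mem (fun j _ => (hp j).le) hS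
      (fun j _ => hxΔ j)
  have hjex : ∃ i ∈ (Finset.univ : Finset I),
      (Finset.univ.sup' Finset.univ_nonempty fun i => ∑ θ, α i θ * xstar θ + β i)
        = ∑ θ, α i θ * xstar θ + β i :=
    Finset.exists_mem_eq_sup' _ _
  obtain ⟨i₀, -, hi₀⟩ := hjex
  have hVxstar : V xstar = ∑ θ, α i₀ θ * xstar θ + β i₀ :=
    (hV xstar hxstarΔ).trans hi₀
  have hle : ∀ (j : Fin k) (i : I), ∑ θ, α i θ * x j θ + β i ≤ V (x j) := by
    intro j i
    rw [hV (x j) (hxΔ j)]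
    exact Finset.le_sup' (fun i => ∑ θ, α i θ * x j θ + β i) (Finset.mem_univ i)
  -- linearity of affine pieces over the barycenter
  have hlin : ∀ i : I, ∑ j, p j * (∑ θ, α i θ * x j θ + β i)
      = (∑ j, p j) * (∑ θ, α i θ * xstar θ + β i) := by
    intro i
    have hx : ∀ θ, xstar θ = (∑ j, p j)⁻¹ * ∑ j, p j * x j θ := by
      intro θ
      rw [hxstar]
      simp [Finset.sum_apply]
    have h1 : ∑ θ, α i θ * xstar θ = (∑ j, p j)⁻¹ * ∑ θ, α i θ * ∑ j, p j * x j θ := by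
      rw [Finset.mul_sum]
      refine Finset.sum_congr rfl fun θ _ => ?_
      rw [hx θ]; ring
    have h2 : (∑ j, p j) * ((∑ j, p j)⁻¹ * ∑ θ, α i θ * ∑ j, p j * x j θ + β i)
        = ∑ θ, α i θ * ∑ j, p j * x j θ + (∑ j, p j) * β i := by
      rw [mul_add, ← mul_assoc, mul_inv_cancel₀ hS.ne', one_mul]
    have h3 : ∑ θ, α i θ * ∑ j, p j * x j θ = ∑ j, p j * ∑ θ, α i θ * x j θ := by
      simp_rw [Finset.mul_sum]
      rw [Finset.sum_comm]
      exact Finset.sum_congr rfl fun j _ => Finset.sum_congr rfl fun θ _ => by ring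
    rw [h1, h2, h3]
    simp_rw [mul_add]
    rw [Finset.sum_add_distrib, ← Finset.sum_mul]
  -- equality at each x j
  have heq2 : ∑ j, p j * (∑ θ, α i₀ θ * x j θ + β i₀) = ∑ j, p j * V (x j) := by
    rw [heq, hVxstar, hlin i₀]
  have hkey : ∀ j : Fin k, V (x j) = ∑ θ, α i₀ θ * x j θ + β i₀ := by
    have := (Finset.sum_eq_sum_iff_of_le
      (fun j _ => mul_le_mul_of_nonneg_left (hle j i₀) (hp j).le)).mp heq2
    intro j
    exact (mul_left_cancel₀ (hp j).ne' (this j (Finset.mem_univ j))).symm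
  -- the convex set where piece i₀ dominates all others
  set S : Set (Θ → ℝ) :=
    {y | ∀ i : I, ∑ θ, α i θ * y θ + β i ≤ ∑ θ, α i₀ θ * y θ + β i₀} with hSdef
  have hSconv : Convex ℝ S := by
    intro y hy z hz a b ha hb hab
    intro i
    have hcy : ∀ (c : Θ → ℝ) (d : ℝ),
        ∑ θ, c θ * (a • y + b • z) θ + d
          = a * (∑ θ, c θ * y θ + d) + b * (∑ θ, c θ * z θ + d) := by
      intro c d
      have : ∀ θ, (a • y + b • z) θ = a * y θ + b * z θ := by
        intro θ; simp
      simp only [this]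
      exact faff c d a b y z hab
    rw [hcy (α i) (β i), hcy (α i₀) (β i₀)]
    exact add_le_add (mul_le_mul_of_nonneg_left (hy i) ha)
      (mul_le_mul_of_nonneg_left (hz i) hb)
  have hxS : Set.range x ⊆ S := by
    rintro _ ⟨j, rfl⟩ i
    calc ∑ θ, α i θ * x j θ + β i ≤ V (x j) := hle j i
    _ = ∑ θ, α i₀ θ * x j θ + β i₀ := hkey j
  have hCS : convexHull ℝ (Set.range x) ⊆ S := convexHull_min hxS hSconv
  have hCΔ : convexHull ℝ (Set.range x) ⊆ stdSimplex ℝ Θ :=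
    convexHull_min (by rintro _ ⟨j, rfl⟩; exact hxΔ j) (convex_stdSimplex ℝ Θ)
  refine ⟨α i₀, β i₀, fun y hy => ?_⟩
  rw [hV y (hCΔ hy)]
  refine le_antisymm (Finset.sup'_le _ _ fun i _ => hCS hy i) ?_
  exact Finset.le_sup' (fun i => ∑ θ, α i θ * y θ + β i) (Finset.mem_univ i₀)
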